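/- Let v̄, v, v' be real numbers with v > v' > 0, let T be a natural number with v̄/v' < 1 + T, and let L be a natural number. Then there exists δ̄ ∈ (0,1) such that for every δ ∈ (δ̄, 1): v̄ + δ·(1 − δ^L)/(1 − δ)·v + δ^{L+T+1}/(1 − δ)·v' < v/(1 − δ). -/
import Mathlib


/-- No profitable Phase I deviation: if `v > v' > 0` and `v̄/v' < 1 + T`, then
for all discount factors close enough to 1 the deviator's discounted payoff
bound is strictly less than the equilibrium payoff `v/(1-δ)`. -/
theorem stmt_11 (vbar v v' : ℝ) (hvv' : v > v') (hv' : v' > 0)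
    (T : ℕ) (hT : vbar / v' < 1 + (T : ℝ)) (L : ℕ) :
    ∃ δbar ∈ Set.Ioo (0 : ℝ) 1, ∀ δ ∈ Set.Ioo δbar 1,
      vbar + δ * (1 - δ ^ L) / (1 - δ) * v + δ ^ (L + T + 1) / (1 - δ) * v'
        < v / (1 - δ) := by
  set g : ℝ → ℝ := fun δ =>
    (1 - δ) * v + δ ^ (L + 1) * v - vbar * (1 - δ) - δ ^ (L + T + 1) * v' with hg
  have hgc : Continuous g := by continuity
  have hg1 : g 1 > 0 := by simp [hg]; linarith
  have hopen : IsOpen {x : ℝ | 0 < g x} := isOpen_lt continuous_const hgc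
  rw [Metric.isOpen_iff] at hopen
  obtain ⟨ε, hε, hball⟩ := hopen 1 hg1
  refine ⟨max (1/2) (1 - ε/2), ⟨by positivity,
    max_lt (by norm_num) (by linarith)⟩, ?_⟩
  rintro δ ⟨h1, h2⟩
  have hmax2 := lt_of_le_of_lt (le_max_right (1/2) (1 - ε/2)) h1
  have hmax1 := lt_of_le_of_lt (le_max_left (1/2) (1 - ε/2)) h1
  have hδε : g δ > 0 := by
    apply hball
    rw [Metric.mem_ball, Real.dist_eq, abs_lt]
    constructor <;> linarith
  have h1δ : (0:ℝ) < 1 - δ := by linarith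
  rw [lt_div_iff₀ h1δ]
  have hps : δ ^ (L + 1) = δ ^ L * δ := pow_succ δ L
  field_simp
  have h' : (1 - δ) * v + δ ^ (L + 1) * v - vbar * (1 - δ) - δ ^ (L + T + 1) * v' > 0 := hδε
  nlinarith [h', hps]
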